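/- Let p be a prime and let A, B ⊆ Z/pZ with |A|, |B| ≥ 2. If |A + B| = |A| + |B| − 1 < p and B is an arithmetic progression with difference d, then A and A + B are also arithmetic progressions with difference d. -/

import Mathlib

open scoped Pointwise

open Finset

/-- `A` is an arithmetic progression in `ZMod p` with difference `d`:
`A = {a, a + d, …, a + (|A| - 1) d}` for some `a`, where `d ≠ 0`. -/
def IsAPWith {p : ℕ} (A : Finset (ZMod p)) (d : ZMod p) : Prop :=
  d ≠ 0 ∧ ∃ a : ZMod p, A = (Finset.range A.card).image fun i : ℕ => a + (i : ZMod p) * d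

/-- Auxiliary: the AP of length `n` starting at `a` with difference `d`. -/
def APset {p : ℕ} (a d : ZMod p) (n : ℕ) : Finset (ZMod p) :=
  (Finset.range n).image fun i : ℕ => a + (i : ZMod p) * d

lemma mem_APset {p : ℕ} {a d x : ZMod p} {n : ℕ} :
    x ∈ APset a d n ↔ ∃ i < n, x = a + (i : ZMod p) * d := by
  simp [APset, eq_comm]

lemma natCast_inj_of_lt {p i j : ℕ} (hi : i < p) (hj : j < p)
    (h : (i : ZMod p) = (j : ZMod p)) : i = j := by
  rw [ZMod.natCast_eq_natCast_iff', Nat.mod_eq_of_lt hi, Nat.mod_eq_of_lt hj] at h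
  exact h

lemma card_APset {p : ℕ} (hp : p.Prime) {a d : ZMod p} (hd : d ≠ 0) {n : ℕ} (hn : n ≤ p) :
    (APset a d n).card = n := by
  haveI : Fact p.Prime := ⟨hp⟩
  rw [APset, Finset.card_image_of_injOn, Finset.card_range]
  intro i hi j hj h
  simp only [Finset.coe_range, Set.mem_Iio] at hi hj
  have h' : (i : ZMod p) = (j : ZMod p) := mul_right_cancel₀ hd (add_left_cancel h)
  exact natCast_inj_of_lt (lt_of_lt_of_le hi hn) (lt_of_lt_of_le hj hn) h'

lemma APset_add {p : ℕ} (a b d : ZMod p) {m n : ℕ} (hm : 1 ≤ m) (hn : 1 ≤ n) :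
    APset a d m + APset b d n = APset (a + b) d (m + n - 1) := by
  ext x
  simp only [Finset.mem_add, mem_APset]
  constructor
  · rintro ⟨y, ⟨i, hi, rfl⟩, z, ⟨j, hj, rfl⟩, rfl⟩
    exact ⟨i + j, by omega, by push_cast; ring⟩
  · rintro ⟨k, hk, rfl⟩
    set i := min k (m - 1) with hi
    set j := k - i with hj
    have hij : i + j = k := by omega
    refine ⟨a + (i : ZMod p) * d, ⟨i, by omega, rfl⟩, b + (j : ZMod p) * d, ⟨j, by omega, rfl⟩, ?_⟩
    have : ((i : ZMod p) + (j : ZMod p)) = (k : ZMod p) := by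
      rw [← Nat.cast_add, hij]
    calc a + (i : ZMod p) * d + (b + (j : ZMod p) * d)
        = a + b + ((i : ZMod p) + (j : ZMod p)) * d := by ring
      _ = a + b + (k : ZMod p) * d := by rw [this]

lemma downward_closed_eq_range (T : Finset ℕ) (h : ∀ j, j + 1 ∈ T → j ∈ T) :
    T = Finset.range T.card := by
  have desc : ∀ m j, j + m ∈ T → j ∈ T := by
    intro m
    induction m with
    | zero => intro j hj; simpa using hj
    | succ m ih =>
        intro j hj
        have : j + m + 1 ∈ T := by rwa [show j + m + 1 = j + (m + 1) by ring]
        exact ih j (h _ this)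
  have hsub : T ⊆ Finset.range T.card := by
    intro k hk
    rw [Finset.mem_range]
    by_contra hc
    push_neg at hc
    have hr : Finset.range (k + 1) ⊆ T := by
      intro j hj
      rw [Finset.mem_range] at hj
      exact desc (k - j) j (by rwa [show j + (k - j) = k by omega])
    have := Finset.card_le_card hr
    rw [Finset.card_range] at this
    omega
  exact Finset.eq_of_subset_of_card_le hsub (by simp)

lemma key_lemma {p : ℕ} (hp : p.Prime) {d : ZMod p} (hd : d ≠ 0) {A : Finset (ZMod p)}
    (hAlt : A.card < p) {a0 : ZMod p} (ha0 : a0 ∈ A)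
    (hstep : ∀ x ∈ A, x + d ∈ A ∨ x = a0) :
    A = (Finset.range A.card).image fun j : ℕ => a0 - (j : ZMod p) * d := by
  haveI : Fact p.Prime := ⟨hp⟩
  set f : ℕ → ZMod p := fun j => a0 - (j : ZMod p) * d with hf
  set T : Finset ℕ := (Finset.range p).filter (fun j => f j ∈ A) with hT
  have hinj : Set.InjOn f (Finset.range p : Set ℕ) := by
    intro i hi j hj h
    simp only [Finset.coe_range, Set.mem_Iio] at hi hj
    simp only [hf] at h
    have h2 : (i : ZMod p) * d = (j : ZMod p) * d := by linear_combination -h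
    exact natCast_inj_of_lt hi hj (mul_right_cancel₀ hd h2)
  have himage : T.image f = A := by
    apply Finset.Subset.antisymm
    · intro x hx
      simp only [hT, Finset.mem_image, Finset.mem_filter] at hx
      obtain ⟨j, ⟨_, hj⟩, rfl⟩ := hx
      exact hj
    · intro x hx
      set j : ℕ := ((a0 - x) * d⁻¹).val with hjdef
      have hjp : j < p := ZMod.val_lt _
      have hjcast : (j : ZMod p) = (a0 - x) * d⁻¹ := by
        simp [hjdef, ZMod.natCast_val, ZMod.cast_id]
      have hfj : f j = x := by
        simp only [hf, hjcast]
        field_simp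
        ring
      rw [Finset.mem_image]
      exact ⟨j, by simp [hT, Finset.mem_filter, Finset.mem_range, hjp, hfj, hx], hfj⟩
  have hcardT : T.card = A.card := by
    rw [← himage, Finset.card_image_of_injOn (hinj.mono (by
      intro x hx
      simp only [hT, Finset.coe_filter, Set.mem_setOf_eq] at hx
      simpa using hx.1))]
  have hdc : ∀ j, j + 1 ∈ T → j ∈ T := by
    intro j hj
    simp only [hT, Finset.mem_filter, Finset.mem_range] at hj ⊢
    obtain ⟨hjp, hjA⟩ := hj
    refine ⟨by omega, ?_⟩
    rcases hstep _ hjA with h | h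
    · have : f (j + 1) + d = f j := by
        simp only [hf]
        push_cast
        ring
      rwa [this] at h
    · exfalso
      simp only [hf] at h
      have h1 : ((j + 1 : ℕ) : ZMod p) * d = 0 := by linear_combination -h
      have h2 : ((j + 1 : ℕ) : ZMod p) = 0 := by
        rcases mul_eq_zero.mp h1 with h' | h'
        · exact h'
        · exact absurd h' hd
      have := natCast_inj_of_lt hjp (hp.pos) (by simpa using h2)
      omega
  have htr := downward_closed_eq_range T hdc
  rw [← hcardT, ← htr, himage]

lemma reverse_image {p : ℕ} (a0 d : ZMod p) {n : ℕ} (hn : 1 ≤ n) :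
    ((Finset.range n).image fun j : ℕ => a0 - (j : ZMod p) * d) =
      (Finset.range n).image fun i : ℕ =>
        (a0 - ((n - 1 : ℕ) : ZMod p) * d) + (i : ZMod p) * d := by
  ext x
  simp only [Finset.mem_image, Finset.mem_range]
  constructor
  · rintro ⟨j, hj, rfl⟩
    refine ⟨n - 1 - j, by omega, ?_⟩
    have h1 : ((n - 1 - j : ℕ) : ZMod p) = ((n - 1 : ℕ) : ZMod p) - (j : ZMod p) := by
      rw [Nat.cast_sub (by omega)]
    rw [h1]; ring
  · rintro ⟨i, hi, rfl⟩
    refine ⟨n - 1 - i, by omega, ?_⟩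
    have h1 : ((n - 1 - i : ℕ) : ZMod p) = ((n - 1 : ℕ) : ZMod p) - (i : ZMod p) := by
      rw [Nat.cast_sub (by omega)]
    rw [h1]; ring

theorem stmt4 (p : ℕ) (hp : p.Prime) (A B : Finset (ZMod p))
    (hA : 2 ≤ A.card) (hB : 2 ≤ B.card) (d : ZMod p)
    (hsum : (A + B).card = A.card + B.card - 1)
    (hlt : A.card + B.card - 1 < p)
    (hAP : IsAPWith B d) :
    IsAPWith A d ∧ IsAPWith (A + B) d := by
  haveI : Fact p.Prime := ⟨hp⟩
  obtain ⟨hd, b, hBeq⟩ := hAP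
  set n := A.card with hn
  set k := B.card with hk
  have hBAP : B = APset b d k := hBeq
  have hk1p : k - 1 ≤ p := by omega
  -- decompose B = P2 + Pk
  have hBdecomp : APset b d 2 + APset (0 : ZMod p) d (k - 1) = B := by
    rw [APset_add b 0 d (by norm_num) (by omega), add_zero, hBAP]
    congr 1
    omega
  have hA2ub : (A + APset b d 2).card ≤ n + 1 := by
    have hassoc : (A + APset b d 2) + APset (0 : ZMod p) d (k - 1) = A + B := by
      rw [add_assoc, hBdecomp]
    have hne1 : (A + APset b d 2).Nonempty := by
      apply Finset.Nonempty.add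
      · exact Finset.card_pos.mp (by omega)
      · rw [← Finset.card_pos, card_APset hp hd (by omega)]; omega
    have hne2 : (APset (0 : ZMod p) d (k - 1)).Nonempty := by
      rw [← Finset.card_pos, card_APset hp hd hk1p]; omega
    have hcd := ZMod.cauchy_davenport hp hne1 hne2
    rw [hassoc, hsum, card_APset hp hd hk1p] at hcd
    rcases min_le_iff.mp hcd with h | h
    · omega
    · omega
  have hA2lb : n + 1 ≤ (A + APset b d 2).card := by
    have hneA : A.Nonempty := Finset.card_pos.mp (by omega)
    have hne2 : (APset b d 2).Nonempty := by
      rw [← Finset.card_pos, card_APset hp hd (by omega)]; omega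
    have hcd := ZMod.cauchy_davenport hp hneA hne2
    rw [card_APset hp hd (by omega)] at hcd
    rcases min_le_iff.mp hcd with h | h
    · exfalso
      have hle : (A + APset b d 2).card ≤ n + 1 := hA2ub
      omega
    · omega
  have hA2 : (A + APset b d 2).card = n + 1 := le_antisymm hA2ub hA2lb
  -- A + P2 = (A ∪ C).image (· + b) where C = A.image (· + d)
  set C : Finset (ZMod p) := A.image (· + d) with hC
  have himg : A + APset b d 2 = (A ∪ C).image (· + b) := by
    ext x
    simp only [Finset.mem_add, mem_APset, Finset.mem_image, Finset.mem_union, hC]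
    constructor
    · rintro ⟨y, hy, z, ⟨i, hi, rfl⟩, rfl⟩
      interval_cases i
      · exact ⟨y, Or.inl hy, by push_cast; ring⟩
      · exact ⟨y + d, Or.inr ⟨y, hy, rfl⟩, by push_cast; ring⟩
    · rintro ⟨w, hw | ⟨y, hy, rfl⟩, rfl⟩
      · exact ⟨w, hw, b, ⟨0, by omega, by push_cast; ring⟩, by ring⟩
      · exact ⟨y, hy, b + d, ⟨1, by omega, by push_cast; ring⟩, by ring⟩
  have hunion : (A ∪ C).card = n + 1 := by
    rw [← hA2, himg, Finset.card_image_of_injective _ (add_left_injective b)]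
  have hCA : (C \ A).card = 1 := by
    have h1 : (C \ A).card + A.card = (C ∪ A).card := Finset.card_sdiff_add_card C A
    rw [Finset.union_comm, hunion] at h1
    omega
  obtain ⟨e, he⟩ := Finset.card_eq_one.mp hCA
  have heC : e ∈ C := (Finset.mem_sdiff.mp (he ▸ Finset.mem_singleton_self e)).1
  obtain ⟨a0, ha0A, ha0e⟩ := Finset.mem_image.mp heC
  have hstep : ∀ x ∈ A, x + d ∈ A ∨ x = a0 := by
    intro x hx
    by_cases hxd : x + d ∈ A
    · exact Or.inl hxd
    · right
      have : x + d ∈ C \ A := Finset.mem_sdiff.mpr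
        ⟨Finset.mem_image.mpr ⟨x, hx, rfl⟩, hxd⟩
      rw [he, Finset.mem_singleton] at this
      rw [← ha0e] at this
      exact add_right_cancel this
  have hAkey := key_lemma hp hd (show A.card < p by omega) ha0A hstep
  set a : ZMod p := a0 - ((n - 1 : ℕ) : ZMod p) * d with ha
  have hAeq : A = (Finset.range n).image fun i : ℕ => a + (i : ZMod p) * d := by
    rw [hAkey, ← hn, reverse_image a0 d (by omega)]
  have hAAP : IsAPWith A d := ⟨hd, a, by rw [← hn]; exact hAeq⟩
  refine ⟨hAAP, hd, a + b, ?_⟩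
  have hABeq : A + B = APset (a + b) d (n + k - 1) := by
    rw [show A = APset a d n from hAeq, hBAP, APset_add a b d (by omega) (by omega)]
  rw [hsum, hABeq]
  rfl
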